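/- Let γ be an (ε)-contour in Λ(l) at σ with 0 ∈ Θ(γ) and |γ| < 2l. Then Δ_γ H^ω_{Λ(l)}(σ) ≥ 2|γ|/9. -/

import Mathlib

open Finset

/-! ### Basic lattice notions for the 2-D Ising model on the square Λ(l) -/

abbrev Site := ℤ × ℤ

/-- `l¹`-distance on `ℤ²`. -/
def d1 (x y : Site) : ℤ := |x.1 - y.1| + |x.2 - y.2|

/-- `l∞`-distance on `ℤ²`. -/
def dinf (x y : Site) : ℤ := max |x.1 - y.1| |x.2 - y.2|

/-- There is a path from `x` to `y` inside `S` with steps of `d`-distance 1. -/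
def ChainIn (d : Site → Site → ℤ) (S : Set Site) (x y : Site) : Prop :=
  ∃ L : List Site, L.Chain' (fun a b => d a b = 1) ∧ L.head? = some x ∧
    L.getLast? = some y ∧ ∀ a ∈ L, a ∈ S

/-- `S` is connected with respect to steps of `d`-distance 1. -/
def ConnIn (d : Site → Site → ℤ) (S : Set Site) : Prop :=
  ∀ x ∈ S, ∀ y ∈ S, ChainIn d S x y

def lamLo (l : ℕ) : ℤ := 1 - (((l + 1) / 2 : ℕ) : ℤ)
def lamHi (l : ℕ) : ℤ := ((l / 2 : ℕ) : ℤ)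

/-- The lamBox the box. -/
noncomputable def lamBox (l : ℕ) : Finset Site := Finset.Icc (lamLo l, lamLo l) (lamHi l, lamHi l)

/-- The exterior boundary `∂_ex Λ(l)`. -/
def extBdry (l : ℕ) : Set Site := {y | y ∉ lamBox l ∧ ∃ x ∈ lamBox l, d1 x y = 1}

/-- An interval of `∂_ex Λ(l)` : an `l∞`-connected subset of it. -/
def IsBdryInterval (l : ℕ) (I : Finset Site) : Prop :=
  (↑I : Set Site) ⊆ extBdry l ∧ ConnIn dinf ↑I

/-- The four nearest neighbours of a site. -/
def nbrs (x : Site) : Finset Site :=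
  {(x.1 + 1, x.2), (x.1 - 1, x.2), (x.1, x.2 + 1), (x.1, x.2 - 1)}

/-- A dual bond, recorded by its two endpoints `v`, a dual vertex `v` standing for the
point `v + (1/2, 1/2)` of the dual lattice. -/
abbrev DBond := Sym2 Site

/-- The dual bond of the nearest-neighbour bond `{x, y}`. -/
def dualBond (x y : Site) : DBond :=
  if x.2 = y.2 then s((min x.1 y.1, x.2 - 1), (min x.1 y.1, x.2))
  else s((x.1 - 1, min x.2 y.2), (x.1, min x.2 y.2))

/-- `∂Q(Θ)` : the set of dual bonds separating `Θ` from its complement. -/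
def contourOf (Θ : Finset Site) : Finset DBond :=
  Θ.biUnion fun x => ((nbrs x).filter (· ∉ Θ)).image fun y => dualBond x y

/-- `Θ` and its complement are `l¹`-connected, so that `∂Q(Θ)` is a contour. -/
def IsContourRegion (Θ : Finset Site) : Prop :=
  ConnIn d1 ↑Θ ∧ ConnIn d1 ((↑Θ : Set Site)ᶜ)

/-- `∂Q(Λ(l))`, as a set of dual bonds. -/
noncomputable def boxBdry (l : ℕ) : Finset DBond := contourOf (lamBox l)

/-- The dual vertex `v` lies on the side `F_l^j` of `Q(Λ(l))` (`j ∈ {1,-1,2,-2}` for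
right, left, top, bottom). -/
def onSide (l : ℕ) (j : ℤ) (v : Site) : Prop :=
  (j = 1 ∧ v.1 = lamHi l ∧ lamLo l - 1 ≤ v.2 ∧ v.2 ≤ lamHi l) ∨
  (j = -1 ∧ v.1 = lamLo l - 1 ∧ lamLo l - 1 ≤ v.2 ∧ v.2 ≤ lamHi l) ∨
  (j = 2 ∧ v.2 = lamHi l ∧ lamLo l - 1 ≤ v.1 ∧ v.1 ≤ lamHi l) ∨
  (j = -2 ∧ v.2 = lamLo l - 1 ∧ lamLo l - 1 ≤ v.1 ∧ v.1 ≤ lamHi l)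

/-- The set of dual bonds `γ` meets the side `F_l^j`. -/
def touches (l : ℕ) (j : ℤ) (γ : Finset DBond) : Prop :=
  ∃ e ∈ γ, ∃ v : Site, v ∈ e ∧ onSide l j v

def HorizCrossing (l : ℕ) (γ : Finset DBond) : Prop := touches l 1 γ ∧ touches l (-1) γ
def VertCrossing (l : ℕ) (γ : Finset DBond) : Prop := touches l 2 γ ∧ touches l (-2) γ

/-- `γ` is neither horizontally nor vertically crossing. -/
def NonCrossing (l : ℕ) (γ : Finset DBond) : Prop :=
  ¬ (HorizCrossing l γ ∨ VertCrossing l γ)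

/-- Two dual bonds are adjacent if they share a dual vertex. -/
def DAdj (a b : DBond) : Prop := ∃ v : Site, v ∈ a ∧ v ∈ b

/-- A set of dual bonds is connected (via shared dual vertices). -/
def DConn (S : Finset DBond) : Prop :=
  ∀ e ∈ S, ∀ f ∈ S, ∃ L : List DBond, L.Chain' DAdj ∧ L.head? = some e ∧
    L.getLast? = some f ∧ ∀ a ∈ L, a ∈ S

/-- Dual bonds separating `Θt` from `Λ(l) \ Θt` inside the lamBox. -/
noncomputable def interiorBdry (l : ℕ) (Θt : Finset Site) : Finset DBond :=
  Θt.biUnion fun x => ((nbrs x).filter fun y => y ∈ lamBox l ∧ y ∉ Θt).image fun y => dualBond x y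

/-- The sites of `Λ(l)` along the side `F_l^j`. -/
def sideSites (l : ℕ) (j : ℤ) (x : Site) : Prop :=
  x ∈ lamBox l ∧ ((j = 1 ∧ x.1 = lamHi l) ∨ (j = -1 ∧ x.1 = lamLo l) ∨
    (j = 2 ∧ x.2 = lamHi l) ∨ (j = -2 ∧ x.2 = lamLo l))

/-- The data of the distinguished connected component `γ̲ = γu` of `γ \ ∂Q(Λ(l))` and of the
region `Θ̃ = Θt` into which a non-crossing contour `γ = ∂Q(Θ)` divides the lamBox: `γu` is a
connected component of `γ \ ∂Q(Λ(l))` dividing `Λ(l)` into the `l¹`-connected pieces `Θt` and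
`Λ(l) \ Θt`, with `Θ ⊆ Θt` and `F_l^i ∪ F_l^j ⊆ ∂Q(Λ(l) \ Θt)` for untouched sides `i, j`. -/
def UnderlineData (l : ℕ) (Θ : Finset Site) (γu : Finset DBond) (Θt : Finset Site) : Prop :=
  γu ⊆ contourOf Θ \ boxBdry l ∧ DConn γu ∧
  (∀ e ∈ contourOf Θ \ boxBdry l, e ∉ γu → ∀ f ∈ γu, ¬ DAdj e f) ∧
  Θ ⊆ Θt ∧ Θt ⊆ lamBox l ∧ ConnIn d1 ↑Θt ∧ ConnIn d1 ↑(lamBox l \ Θt) ∧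
  interiorBdry l Θt = γu ∧
  ∃ i j : ℤ, (i = 1 ∨ i = -1) ∧ (j = 2 ∨ j = -2) ∧
    ¬ touches l i (contourOf Θ) ∧ ¬ touches l j (contourOf Θ) ∧
    (∀ x, sideSites l i x → x ∉ Θt) ∧ (∀ x, sideSites l j x → x ∉ Θt)

/-- `γ̄ = ∂Q(Λ(l)) ∩ ∂Q(Θ̃)`. -/
noncomputable def gammaBar (l : ℕ) (Θt : Finset Site) : Finset DBond := boxBdry l ∩ contourOf Θt

/-- `V_ex(γ)` : sites of the exterior boundary attached to dual bonds of `γ`. -/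
noncomputable def Vex (l : ℕ) (γ : Finset DBond) : Finset Site :=
  (lamBox l).biUnion fun x => (nbrs x).filter fun y => y ∉ lamBox l ∧ dualBond x y ∈ γ

/-- `T_Θ` : flip the spins in `Θ`. -/
def flipC (Θ : Finset Site) (σ : Site → ℤ) : Site → ℤ :=
  fun x => if x ∈ Θ then -σ x else σ x

/-- The Ising Hamiltonian `H^ω_{Λ(l)}(σ)` with boundary condition `ω`. -/
noncomputable def Ham (l : ℕ) (ω : Site → ℝ) (σ : Site → ℤ) : ℝ :=
  -(1/2) * ∑ x ∈ lamBox l, ∑ y ∈ (nbrs x).filter (· ∈ lamBox l), ((σ x * σ y : ℤ) : ℝ)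
    - ∑ x ∈ lamBox l, ∑ y ∈ (nbrs x).filter (· ∉ lamBox l), (σ x : ℝ) * ω y

/-- `Δ_{γ₁,…,γ_p} H^ω_{Λ(l)}(σ) = H(σ) - H(T_{γ₁}∘⋯∘T_{γ_p} σ)`, the contours being
recorded by their regions `Θ(γ_j)`. -/
noncomputable def dH (l : ℕ) (ω : Site → ℝ) (Θs : List (Finset Site)) (σ : Site → ℤ) : ℝ :=
  Ham l ω σ - Ham l ω (Θs.foldr flipC σ)

/-- `C` is an (ε)-cluster in `Λ(l)` at `σ` : a maximal `l¹`-connected component of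
`{x ∈ Λ(l) : σ_x = ε}`. -/
def IsCluster (l : ℕ) (σ : Site → ℤ) (ε : ℤ) (C : Finset Site) : Prop :=
  C.Nonempty ∧ (∀ x ∈ C, x ∈ lamBox l ∧ σ x = ε) ∧ ConnIn d1 ↑C ∧
  ∀ y ∈ lamBox l, σ y = ε → (∃ x ∈ C, d1 x y = 1) → y ∈ C

/-- The `l¹`-connected component of `x` within `S`. -/
def l1Comp (S : Set Site) (x : Site) : Set Site := {y | ChainIn d1 S x y}

/-- `C` together with the bounded components of its complement; `∂Q(fill C)` is the outer
boundary of `Q(C)`. -/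
def fill (C : Finset Site) : Set Site :=
  ↑C ∪ {x | (l1Comp ((↑C : Set Site)ᶜ) x).Finite}

/-- `Θ` is the region `Θ(γ)` of an (ε)-contour `γ` in `Λ(l)` at `σ`. -/
def IsEContour (l : ℕ) (σ : Site → ℤ) (ε : ℤ) (Θ : Finset Site) : Prop :=
  ∃ C : Finset Site, IsCluster l σ ε C ∧ (↑Θ : Set Site) = fill C

/-- A dual bond is horizontal. -/
def isHorizD (e : DBond) : Prop := ∃ v w : Site, e = s(v, w) ∧ v.2 = w.2

/-- A dual bond is vertical. -/
def isVertD (e : DBond) : Prop := ∃ v w : Site, e = s(v, w) ∧ v.1 = w.1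

open Classical in
/-- The number of horizontal dual bonds in `γ`. -/
noncomputable def horizCount (γ : Finset DBond) : ℕ := (γ.filter isHorizD).card

open Classical in
/-- The number of vertical dual bonds in `γ`. -/
noncomputable def vertCount (γ : Finset DBond) : ℕ := (γ.filter isVertD).card

/-! ### Glauber dynamics -/

/-- Configurations on a finite `Λ ⊂ ℤ²` (`true` = spin `+1`, `false` = spin `-1`). -/
abbrev Cfg (Λ : Finset Site) := ↥Λ → Bool

/-- The spin value of a Boolean. -/
def spinVal (b : Bool) : ℝ := if b then 1 else -1

/-- The Ising Hamiltonian on a general finite `Λ`. -/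
noncomputable def HamG (Λ : Finset Site) (ω : Site → ℝ) (σ : Cfg Λ) : ℝ :=
  -(1/2) * ∑ x : ↥Λ, ∑ y : ↥Λ, (if d1 ↑x ↑y = 1 then spinVal (σ x) * spinVal (σ y) else 0)
    - ∑ x : ↥Λ, ∑ y ∈ (nbrs ↑x).filter (· ∉ Λ), spinVal (σ x) * ω y

/-- The finite-volume Gibbs measure `μ^ω_Λ` at inverse temperature `β`. -/
noncomputable def gibbs (Λ : Finset Site) (ω : Site → ℝ) (β : ℝ) (σ : Cfg Λ) : ℝ :=
  Real.exp (-β * HamG Λ ω σ) / ∑ τ : Cfg Λ, Real.exp (-β * HamG Λ ω τ)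

/-- The mean of `f` under the weights `μ`. -/
noncomputable def meanW (Λ : Finset Site) (μ f : Cfg Λ → ℝ) : ℝ := ∑ σ : Cfg Λ, μ σ * f σ

/-- `σ^x` : flip the spin at `x`. -/
def flipAt (Λ : Finset Site) (σ : Cfg Λ) (x : ↥Λ) : Cfg Λ := Function.update σ x (!(σ x))

/-- The generator `A^ω_Λ` of the stochastic Ising model with flip rates `q`. -/
noncomputable def genA (Λ : Finset Site) (q : ↥Λ → Cfg Λ → ℝ) (f : Cfg Λ → ℝ) (σ : Cfg Λ) : ℝ :=
  ∑ x : ↥Λ, q x σ * (f (flipAt Λ σ x) - f σ)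

/-- The variance `μ(|f - μf|²)`. -/
noncomputable def varW (Λ : Finset Site) (μ f : Cfg Λ → ℝ) : ℝ :=
  meanW Λ μ (fun σ => |f σ - meanW Λ μ f| ^ 2)

/-- The spectral gap `gap(Λ, ω, β)` : the infimum of the Rayleigh quotients
`-μ(f A f) / μ(|f - μf|²)`. -/
noncomputable def specGap (Λ : Finset Site) (ω : Site → ℝ) (β : ℝ)
    (q : ↥Λ → Cfg Λ → ℝ) : ℝ :=
  sInf { r | ∃ f : Cfg Λ → ℝ, varW Λ (gibbs Λ ω β) f ≠ 0 ∧
    r = (- meanW Λ (gibbs Λ ω β) fun σ => f σ * genA Λ q f σ) / varW Λ (gibbs Λ ω β) f }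

/-- The `±1`-spin function of a configuration on `Λ(l)` (`0` outside the lamBox). -/
noncomputable def toSpin (l : ℕ) (σ : Cfg (lamBox l)) : Site → ℤ :=
  fun x => if h : x ∈ lamBox l then (if σ ⟨x, h⟩ then 1 else -1) else 0

/-- The magnetization at the origin, `μ^ω_{Λ(l)}(σ₀)`. -/
noncomputable def magZero (l : ℕ) (ω : Site → ℝ) (β : ℝ) : ℝ :=
  ∑ σ : Cfg (lamBox l), gibbs (lamBox l) ω β σ * ((toSpin l σ (0, 0) : ℤ) : ℝ)

/-- The favoured sign `ε_{l,ω}`. -/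
noncomputable def epsSign (l : ℕ) (ω : Site → ℝ) (β : ℝ) : ℤ :=
  if 0 ≤ magZero l ω β then 1 else -1

/-- The trap event `Γ_l` : some (ε)-contour `γ` at `σ` meets `∂Q(Λ(l))` and has
`|γ| ≥ 2δ₁ l`. -/
def GammaEvent (l : ℕ) (δ₁ : ℝ) (ε : ℤ) : Set (Cfg (lamBox l)) :=
  {σ | ∃ Θ : Finset Site, IsEContour l (toSpin l σ) ε Θ ∧
    (contourOf Θ ∩ boxBdry l).Nonempty ∧ 2 * δ₁ * l ≤ ((contourOf Θ).card : ℝ)}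

open Classical in
/-- The Gibbs probability of an event `S ⊂ Ω_{Λ(l)}`. -/
noncomputable def probOf (l : ℕ) (ω : Site → ℝ) (β : ℝ) (S : Set (Cfg (lamBox l))) : ℝ :=
  ∑ σ ∈ Finset.univ.filter (· ∈ S), gibbs (lamBox l) ω β σ

/-- Union of the contours of a list of regions. -/
def unionB (L : List (Finset Site)) : Finset DBond :=
  L.foldr (fun Θ s => contourOf Θ ∪ s) ∅

/-- Union of a list of regions. -/
def unionR (L : List (Finset Site)) : Finset Site :=
  L.foldr (· ∪ ·) ∅


section AuxStmt10

lemma mem_nbrs {x y : Site} : y ∈ nbrs x ↔ y = (x.1+1, x.2) ∨ y = (x.1-1,x.2) ∨ y = (x.1,x.2+1) ∨ y = (x.1,x.2-1) := by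
  simp [nbrs]

lemma nbrs_symm {x y : Site} (h : y ∈ nbrs x) : x ∈ nbrs y := by
  rcases mem_nbrs.1 h with h|h|h|h <;> subst h <;> simp [mem_nbrs, Prod.ext_iff]

lemma d1_of_nbrs {x y : Site} (h : y ∈ nbrs x) : d1 x y = 1 := by
  rcases mem_nbrs.1 h with h|h|h|h <;> subst h <;> simp [d1]

lemma mem_lamBox {l : ℕ} {x : Site} : x ∈ lamBox l ↔ lamLo l ≤ x.1 ∧ x.1 ≤ lamHi l ∧ lamLo l ≤ x.2 ∧ x.2 ≤ lamHi l := by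
  simp [lamBox, Finset.mem_Icc, Prod.le_def]; tauto

lemma lo_hi {l : ℕ} (hl : 1 ≤ l) : lamLo l ≤ 0 ∧ 0 ≤ lamHi l ∧ lamHi l - lamLo l = l - 1 ∧ 2*(1 - lamLo l) ≥ l ∧ 2*(lamHi l + 1) ≥ l := by
  unfold lamLo lamHi; omega

lemma chainIn_refl {d : Site → Site → ℤ} {S : Set Site} {x : Site} (hx : x ∈ S) : ChainIn d S x x :=
  ⟨[x], List.isChain_singleton x, by simp, by simp, by simpa⟩

lemma chainIn_cons {d : Site → Site → ℤ} {S : Set Site} {x y z : Site} (hx : x ∈ S)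
    (hxy : d x y = 1) (h : ChainIn d S y z) : ChainIn d S x z := by
  obtain ⟨L, hc, hh, hl, hm⟩ := h
  cases L with
  | nil => simp at hh
  | cons a t =>
    have ha : a = y := by simpa using hh
    subst ha
    refine ⟨x :: a :: t, ?_, by simp, by simpa using hl, ?_⟩
    · exact List.IsChain.cons_cons hxy hc
    · intro a ha; rcases List.mem_cons.1 ha with rfl | ha
      · exact hx
      · exact hm a ha

lemma chainIn_snoc {d : Site → Site → ℤ} {S : Set Site} {x y z : Site} (hz : z ∈ S)
    (hyz : d y z = 1) (h : ChainIn d S x y) : ChainIn d S x z := by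
  obtain ⟨L, hc, hh, hl, hm⟩ := h
  refine ⟨L ++ [z], ?_, ?_, ?_, ?_⟩
  · unfold List.Chain'
    rw [List.isChain_append]
    refine ⟨hc, by simp, ?_⟩
    intro a ha b hb
    simp at hb; subst hb
    rw [hl] at ha; simp at ha; subst ha; exact hyz
  · cases L with
    | nil => simp at hh
    | cons a t => simpa using hh
  · simp
  · intro a ha; rcases List.mem_append.1 ha with ha | ha
    · exact hm a ha
    · simp at ha; subst ha; exact hz

lemma l1Comp_mono_adj {S : Set Site} {x y : Site} (hx : x ∈ S) (hxy : d1 x y = 1) :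
    l1Comp S y ⊆ l1Comp S x := fun _ hz => chainIn_cons hx hxy hz

/-- ray infiniteness -/
lemma ray_infinite {S : Set Site} {x : Site} {e : Site} (he : |e.1| + |e.2| = 1)
    (h : ∀ k : ℕ, ((x.1 + k*e.1, x.2 + k*e.2) : Site) ∈ S) :
    (l1Comp S x).Infinite := by
  have hmem : ∀ k : ℕ, ((x.1 + k*e.1, x.2 + k*e.2) : Site) ∈ l1Comp S x := by
    intro k
    induction k with
    | zero => simpa [l1Comp] using chainIn_refl (by simpa using h 0)
    | succ n ih =>
      refine chainIn_snoc (h (n+1)) ?_ ih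
      simp only [d1]
      push_cast
      rw [show (x.1 + (n:ℤ)*e.1 - (x.1 + ((n:ℤ)+1)*e.1)) = -e.1 by ring,
         show (x.2 + (n:ℤ)*e.2 - (x.2 + ((n:ℤ)+1)*e.2)) = -e.2 by ring, abs_neg, abs_neg]
      exact he
  have hinj : Function.Injective (fun k : ℕ => ((x.1 + k*e.1, x.2 + k*e.2) : Site)) := by
    intro a b hab
    simp only [Prod.mk.injEq] at hab
    have he1 : e.1 ≠ 0 ∨ e.2 ≠ 0 := by rcases abs_cases e.1 with ⟨h1,_⟩|⟨h1,_⟩ <;> rcases abs_cases e.2 with ⟨h2,_⟩|⟨h2,_⟩ <;> omega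
    rcases he1 with h1 | h1
    · have h2 : (a:ℤ) * e.1 = b * e.1 := by linarith [hab.1]
      exact_mod_cast mul_right_cancel₀ h1 h2
    · have h2 : (a:ℤ) * e.2 = b * e.2 := by linarith [hab.2]
      exact_mod_cast mul_right_cancel₀ h1 h2
  exact Set.infinite_of_injective_forall_mem hinj hmem

lemma d1_step_f {p q : Site} (h : d1 p q = 1) : q.1 ≤ p.1 + 1 ∧ p.1 ≤ q.1 + 1 := by
  simp only [d1] at h
  rcases abs_cases (p.1 - q.1) with ⟨h1,_⟩|⟨h1,_⟩ <;> rcases abs_cases (p.2 - q.2) with ⟨h2,_⟩|⟨h2,_⟩ <;> omega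

/-- intermediate value along a chain, for a 1-Lipschitz ℤ-valued function -/
lemma chain_ivt (f : Site → ℤ) (hf : ∀ p q : Site, d1 p q = 1 → f q ≤ f p + 1 ∧ f p ≤ f q + 1) :
    ∀ (L : List Site), L.Chain' (fun a b => d1 a b = 1) → ∀ a b : Site,
      L.head? = some a → L.getLast? = some b → ∀ m : ℤ, f a ≤ m → m ≤ f b → ∃ p ∈ L, f p = m := by
  intro L
  induction L with
  | nil => intro _ a b ha; simp at ha
  | cons x t ih =>
    intro hc a b ha hb m h1 h2
    have hax : x = a := by simpa using ha
    subst hax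
    by_cases hm : f x = m
    · exact ⟨x, by simp, hm⟩
    cases t with
    | nil =>
      simp at hb; subst hb; omega
    | cons y t' =>
      have hd : d1 x y = 1 := (List.isChain_cons_cons.1 hc).1
      have hstep := hf x y hd
      have := ih (List.isChain_cons_cons.1 hc).2 y b rfl (by simpa using hb) m (by omega) h2
      obtain ⟨p, hp, hpm⟩ := this
      exact ⟨p, List.mem_cons_of_mem _ hp, hpm⟩

lemma exists_between_chain (C : Finset Site) (hC : ConnIn d1 ↑C) (f : Site → ℤ)
    (hf : ∀ p q : Site, d1 p q = 1 → f q ≤ f p + 1 ∧ f p ≤ f q + 1)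
    {a b : Site} (ha : a ∈ C) (hb : b ∈ C) {m : ℤ} (h1 : f a ≤ m) (h2 : m ≤ f b) :
    ∃ p ∈ C, f p = m := by
  obtain ⟨L, hc, hh, hl, hm⟩ := hC a (by simpa) b (by simpa)
  obtain ⟨p, hp, hpm⟩ := chain_ivt f hf L hc a b hh hl m h1 h2
  exact ⟨p, by simpa using hm p hp, hpm⟩

lemma hf_fst : ∀ p q : Site, d1 p q = 1 → p.1 + 1 ≥ q.1 ∧ q.1 + 1 ≥ p.1 := fun p q h => by
  have := d1_step_f h; omega

/-- existence of an upward switch -/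
lemma exists_switch (f : ℤ → Prop) [DecidablePred f] {a b : ℤ} (hab : a ≤ b)
    (ha : ¬ f a) (hb : f b) : ∃ i, a ≤ i ∧ i < b ∧ ¬ f i ∧ f (i+1) := by
  set s := (Finset.Icc a b).filter (fun i => f i) with hs
  have hbs : b ∈ s := by simp [hs, hab, hb]
  have hne : s.Nonempty := ⟨b, hbs⟩
  set i0 := s.min' hne with hi0
  have hi0s : i0 ∈ s := s.min'_mem hne
  have h1 : a ≤ i0 ∧ i0 ≤ b ∧ f i0 := by
    have := hi0s; simp [hs] at this; tauto
  have hne0 : a ≠ i0 := fun h => ha (h ▸ h1.2.2)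
  refine ⟨i0 - 1, by omega, by omega, ?_, by simpa using h1.2.2⟩
  intro hf1
  have : i0 - 1 ∈ s := by simp [hs]; exact ⟨⟨by omega, by omega⟩, hf1⟩
  have := s.min'_le _ this
  omega

lemma exists_switch_down (f : ℤ → Prop) [DecidablePred f] {a b : ℤ} (hab : a ≤ b)
    (ha : f a) (hb : ¬ f b) : ∃ i, a ≤ i ∧ i < b ∧ f i ∧ ¬ f (i+1) := by
  set s := (Finset.Icc a b).filter (fun i => f i) with hs
  have has : a ∈ s := by simp [hs, hab, ha]
  have hne : s.Nonempty := ⟨a, has⟩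
  set i0 := s.max' hne with hi0
  have hi0s : i0 ∈ s := s.max'_mem hne
  have h1 : a ≤ i0 ∧ i0 ≤ b ∧ f i0 := by
    have := hi0s; simp [hs] at this; tauto
  have hne0 : b ≠ i0 := fun h => hb (h ▸ h1.2.2)
  refine ⟨i0, by omega, by omega, h1.2.2, ?_⟩
  intro hf1
  have : i0 + 1 ∈ s := by simp [hs]; exact ⟨⟨by omega, by omega⟩, hf1⟩
  have := s.le_max' _ this
  omega


lemma dB1 (x : Site) : dualBond x (x.1+1, x.2) = s((x.1, x.2-1),(x.1, x.2)) := by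
  simp [dualBond, min_def]
lemma dB2 (x : Site) : dualBond x (x.1-1, x.2) = s((x.1-1, x.2-1),(x.1-1, x.2)) := by
  simp [dualBond, min_def]
lemma dB3 (x : Site) : dualBond x (x.1, x.2+1) = s((x.1-1, x.2),(x.1, x.2)) := by
  simp [dualBond, min_def]
lemma dB4 (x : Site) : dualBond x (x.1, x.2-1) = s((x.1-1, x.2-1),(x.1, x.2-1)) := by
  simp [dualBond, min_def]
  intro h; exact absurd h (by omega)

lemma dualBond_inj {Θ : Finset Site} {x y x' y' : Site}
    (hx : x ∈ Θ) (hy : y ∉ Θ) (hx' : x' ∈ Θ) (hy' : y' ∉ Θ)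
    (hn : y ∈ nbrs x) (hn' : y' ∈ nbrs x')
    (h : dualBond x y = dualBond x' y') : x = x' ∧ y = y' := by
  rcases mem_nbrs.1 hn with rfl|rfl|rfl|rfl <;> rcases mem_nbrs.1 hn' with rfl|rfl|rfl|rfl <;>
    simp only [dB1, dB2, dB3, dB4, Sym2.eq_iff, Prod.mk.injEq] at h
  -- (R,R)
  · simp only [Prod.ext_iff, Prod.mk.injEq] at *; omega
  -- (R,L) bad : x' = y
  · exfalso; apply hy
    have hxx : ((x.1+1, x.2) : Site) = x' := by
      rcases h with ⟨⟨e1,e2⟩,⟨e3,e4⟩⟩|⟨⟨e1,e2⟩,⟨e3,e4⟩⟩ <;> exact Prod.ext_iff.2 ⟨by omega, by omega⟩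
    rw [hxx]; exact hx'
  · simp only [Prod.ext_iff, Prod.mk.injEq] at *; omega
  · simp only [Prod.ext_iff, Prod.mk.injEq] at *; omega
  -- (L,R) bad : x = y'
  · exfalso; apply hy'
    have hxx : ((x'.1+1, x'.2) : Site) = x := by
      rcases h with ⟨⟨e1,e2⟩,⟨e3,e4⟩⟩|⟨⟨e1,e2⟩,⟨e3,e4⟩⟩ <;> exact Prod.ext_iff.2 ⟨by omega, by omega⟩
    rw [hxx]; exact hx
  · simp only [Prod.ext_iff, Prod.mk.injEq] at *; omega
  · simp only [Prod.ext_iff, Prod.mk.injEq] at *; omega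
  · simp only [Prod.ext_iff, Prod.mk.injEq] at *; omega
  · simp only [Prod.ext_iff, Prod.mk.injEq] at *; omega
  · simp only [Prod.ext_iff, Prod.mk.injEq] at *; omega
  · simp only [Prod.ext_iff, Prod.mk.injEq] at *; omega
  -- (U,D) bad : x' = y
  · exfalso; apply hy
    have hxx : ((x.1, x.2+1) : Site) = x' := by
      rcases h with ⟨⟨e1,e2⟩,⟨e3,e4⟩⟩|⟨⟨e1,e2⟩,⟨e3,e4⟩⟩ <;> exact Prod.ext_iff.2 ⟨by omega, by omega⟩
    rw [hxx]; exact hx'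
  · simp only [Prod.ext_iff, Prod.mk.injEq] at *; omega
  · simp only [Prod.ext_iff, Prod.mk.injEq] at *; omega
  -- (D,U) bad : x = y'
  · exfalso; apply hy'
    have hxx : ((x'.1, x'.2+1) : Site) = x := by
      rcases h with ⟨⟨e1,e2⟩,⟨e3,e4⟩⟩|⟨⟨e1,e2⟩,⟨e3,e4⟩⟩ <;> exact Prod.ext_iff.2 ⟨by omega, by omega⟩
    rw [hxx]; exact hx
  · simp only [Prod.ext_iff, Prod.mk.injEq] at *; omega

/-! cut pairs -/

def cutP (Θ : Finset Site) : Finset (Site × Site) :=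
  Θ.biUnion (fun x => ((nbrs x).filter (fun y => y ∉ Θ)).image (fun y => (x, y)))

lemma mem_cutP {Θ : Finset Site} {p : Site × Site} :
    p ∈ cutP Θ ↔ p.1 ∈ Θ ∧ p.2 ∉ Θ ∧ p.2 ∈ nbrs p.1 := by
  rcases p with ⟨x, y⟩
  simp [cutP, Finset.mem_biUnion, Finset.mem_image, Finset.mem_filter]
  tauto

lemma card_contour (Θ : Finset Site) : (contourOf Θ).card = (cutP Θ).card := by
  have himg : contourOf Θ = (cutP Θ).image (fun p => dualBond p.1 p.2) := by
    ext e
    simp only [contourOf, Finset.mem_biUnion, Finset.mem_image, Finset.mem_filter]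
    constructor
    · rintro ⟨x, hx, y, ⟨hy1, hy2⟩, rfl⟩
      exact ⟨(x, y), mem_cutP.2 ⟨hx, hy2, hy1⟩, rfl⟩
    · rintro ⟨p, hp, rfl⟩
      obtain ⟨h1, h2, h3⟩ := mem_cutP.1 hp
      exact ⟨p.1, h1, p.2, ⟨h3, h2⟩, rfl⟩
  rw [himg]
  apply Finset.card_image_of_injOn
  intro p hp q hq h
  obtain ⟨h1, h2, h3⟩ := mem_cutP.1 hp
  obtain ⟨h4, h5, h6⟩ := mem_cutP.1 hq
  obtain ⟨ha, hb⟩ := dualBond_inj h1 h2 h4 h5 h3 h6 h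
  exact Prod.ext ha hb

variable {l : ℕ} {Θ : Finset Site}

/-- horizontal cut pairs -/
def Ph (Θ : Finset Site) : Finset (Site × Site) := (cutP Θ).filter (fun p => p.1.2 = p.2.2)
/-- vertical cut pairs -/
def Pv (Θ : Finset Site) : Finset (Site × Site) := (cutP Θ).filter (fun p => p.1.1 = p.2.1)

lemma card_h_v (Θ : Finset Site) : (cutP Θ).card = (Ph Θ).card + (Pv Θ).card := by
  have : Pv Θ = (cutP Θ).filter (fun p => ¬ p.1.2 = p.2.2) := by
    apply Finset.filter_congr
    intro p hp
    obtain ⟨h1, h2, h3⟩ := mem_cutP.1 hp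
    rcases mem_nbrs.1 h3 with h|h|h|h <;> rw [h] <;> simp <;> omega
  rw [Ph, this, Finset.card_filter_add_card_filter_not]

lemma card_Ph_fiber (hbox : ∀ x ∈ Θ, x ∈ lamBox l) :
    (Ph Θ).card = ∑ j ∈ Finset.Icc (lamLo l) (lamHi l), ((Ph Θ).filter (fun p => p.1.2 = j)).card := by
  apply Finset.card_eq_sum_card_fiberwise
  intro p hp
  have h1 := (mem_cutP.1 (Finset.mem_filter.1 hp).1).1
  have := mem_lamBox.1 (hbox _ h1)
  simp only [Finset.mem_coe, Finset.mem_Icc]; omega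

lemma card_Pv_fiber (hbox : ∀ x ∈ Θ, x ∈ lamBox l) :
    (Pv Θ).card = ∑ i ∈ Finset.Icc (lamLo l) (lamHi l), ((Pv Θ).filter (fun p => p.1.1 = i)).card := by
  apply Finset.card_eq_sum_card_fiberwise
  intro p hp
  have h1 := (mem_cutP.1 (Finset.mem_filter.1 hp).1).1
  have := mem_lamBox.1 (hbox _ h1)
  simp only [Finset.mem_coe, Finset.mem_Icc]; omega

lemma row_two (hbox : ∀ x ∈ Θ, x ∈ lamBox l) {j i0 : ℤ} (h0 : ((i0, j) : Site) ∈ Θ) :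
    2 ≤ ((Ph Θ).filter (fun p => p.1.2 = j)).card := by
  classical
  have hbox0 := mem_lamBox.1 (hbox _ h0)
  have hlow : ¬ (((lamLo l - 1, j) : Site) ∈ Θ) := fun h => by
    have := mem_lamBox.1 (hbox _ h); omega
  have hhigh : ¬ (((lamHi l + 1, j) : Site) ∈ Θ) := fun h => by
    have := mem_lamBox.1 (hbox _ h); omega
  obtain ⟨i1, hi1a, hi1b, hi1c, hi1d⟩ :=
    exists_switch (fun i => ((i, j) : Site) ∈ Θ) (by omega : lamLo l - 1 ≤ i0) hlow h0
  obtain ⟨i2, hi2a, hi2b, hi2c, hi2d⟩ :=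
    exists_switch_down (fun i => ((i, j) : Site) ∈ Θ) (by omega : i0 ≤ lamHi l + 1) h0 hhigh
  have hp1 : (((i1 + 1, j) : Site), ((i1, j) : Site)) ∈ (Ph Θ).filter (fun p => p.1.2 = j) := by
    refine Finset.mem_filter.2 ⟨Finset.mem_filter.2 ⟨mem_cutP.2 ⟨hi1d, hi1c, ?_⟩, rfl⟩, rfl⟩
    rw [mem_nbrs]; right; left; simp
  have hp2 : ((((i2 : ℤ), j) : Site), ((i2 + 1, j) : Site)) ∈ (Ph Θ).filter (fun p => p.1.2 = j) := by
    refine Finset.mem_filter.2 ⟨Finset.mem_filter.2 ⟨mem_cutP.2 ⟨hi2c, hi2d, ?_⟩, rfl⟩, rfl⟩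
    rw [mem_nbrs]; left; simp
  apply Finset.one_lt_card.2
  refine ⟨_, hp1, _, hp2, ?_⟩
  intro h
  simp only [Prod.mk.injEq] at h
  omega

lemma col_two (hbox : ∀ x ∈ Θ, x ∈ lamBox l) {i j0 : ℤ} (h0 : ((i, j0) : Site) ∈ Θ) :
    2 ≤ ((Pv Θ).filter (fun p => p.1.1 = i)).card := by
  classical
  have hbox0 := mem_lamBox.1 (hbox _ h0)
  have hlow : ¬ (((i, lamLo l - 1) : Site) ∈ Θ) := fun h => by
    have := mem_lamBox.1 (hbox _ h); omega
  have hhigh : ¬ (((i, lamHi l + 1) : Site) ∈ Θ) := fun h => by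
    have := mem_lamBox.1 (hbox _ h); omega
  obtain ⟨j1, hj1a, hj1b, hj1c, hj1d⟩ :=
    exists_switch (fun j => ((i, j) : Site) ∈ Θ) (by omega : lamLo l - 1 ≤ j0) hlow h0
  obtain ⟨j2, hj2a, hj2b, hj2c, hj2d⟩ :=
    exists_switch_down (fun j => ((i, j) : Site) ∈ Θ) (by omega : j0 ≤ lamHi l + 1) h0 hhigh
  have hp1 : (((i, j1 + 1) : Site), ((i, j1) : Site)) ∈ (Pv Θ).filter (fun p => p.1.1 = i) := by
    refine Finset.mem_filter.2 ⟨Finset.mem_filter.2 ⟨mem_cutP.2 ⟨hj1d, hj1c, ?_⟩, rfl⟩, rfl⟩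
    rw [mem_nbrs]; right; right; right; simp
  have hp2 : (((i, j2) : Site), ((i, j2 + 1) : Site)) ∈ (Pv Θ).filter (fun p => p.1.1 = i) := by
    refine Finset.mem_filter.2 ⟨Finset.mem_filter.2 ⟨mem_cutP.2 ⟨hj2c, hj2d, ?_⟩, rfl⟩, rfl⟩
    rw [mem_nbrs]; right; right; left; simp
  apply Finset.one_lt_card.2
  refine ⟨_, hp1, _, hp2, ?_⟩
  intro h
  simp only [Prod.mk.injEq] at h
  omega

noncomputable def Pin (l : ℕ) (Θ : Finset Site) : Finset (Site × Site) :=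
  (cutP Θ).filter (fun p => p.2 ∈ lamBox l)
noncomputable def Pout (l : ℕ) (Θ : Finset Site) : Finset (Site × Site) :=
  (cutP Θ).filter (fun p => ¬ p.2 ∈ lamBox l)

lemma card_in_out (l : ℕ) (Θ : Finset Site) :
    (Pin l Θ).card + (Pout l Θ).card = (cutP Θ).card :=
  Finset.card_filter_add_card_filter_not _

lemma surp_rows (hbox : ∀ x ∈ Θ, x ∈ lamBox l) (Rs : Finset ℤ)
    (hRs : Rs ⊆ Finset.Icc (lamLo l) (lamHi l)) (hocc : ∀ j ∈ Rs, ∃ i, ((i, j) : Site) ∈ Θ) :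
    2 * Rs.card ≤ (Ph Θ).card := by
  rw [card_Ph_fiber hbox]
  calc 2 * Rs.card = ∑ _j ∈ Rs, 2 := by rw [Finset.sum_const, smul_eq_mul]; ring
    _ ≤ ∑ j ∈ Rs, ((Ph Θ).filter (fun p => p.1.2 = j)).card := by
        apply Finset.sum_le_sum
        intro j hj
        obtain ⟨i, hi⟩ := hocc j hj
        exact row_two hbox hi
    _ ≤ _ := Finset.sum_le_sum_of_subset hRs

lemma surp_cols (hbox : ∀ x ∈ Θ, x ∈ lamBox l) (Cs : Finset ℤ)
    (hCs : Cs ⊆ Finset.Icc (lamLo l) (lamHi l)) (hocc : ∀ i ∈ Cs, ∃ j, ((i, j) : Site) ∈ Θ) :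
    2 * Cs.card ≤ (Pv Θ).card := by
  rw [card_Pv_fiber hbox]
  calc 2 * Cs.card = ∑ _i ∈ Cs, 2 := by rw [Finset.sum_const, smul_eq_mul]; ring
    _ ≤ ∑ i ∈ Cs, ((Pv Θ).filter (fun p => p.1.1 = i)).card := by
        apply Finset.sum_le_sum
        intro i hi
        obtain ⟨j, hj⟩ := hocc i hi
        exact col_two hbox hj
    _ ≤ _ := Finset.sum_le_sum_of_subset hCs

lemma pout_horiz_bound (hbox : ∀ x ∈ Θ, x ∈ lamBox l) (c c' : ℤ)
    (hform : ∀ p ∈ Pout l Θ, p = (((c, p.1.2) : Site), ((c', p.1.2) : Site))) :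
    2 * (Pout l Θ).card ≤ (Ph Θ).card := by
  classical
  have hBfib : (Pout l Θ).card =
      ∑ j ∈ Finset.Icc (lamLo l) (lamHi l), ((Pout l Θ).filter (fun p => p.1.2 = j)).card := by
    apply Finset.card_eq_sum_card_fiberwise
    intro p hp
    have h1 := (mem_cutP.1 (Finset.mem_filter.1 hp).1).1
    have := mem_lamBox.1 (hbox _ h1)
    simp only [Finset.mem_coe, Finset.mem_Icc]; omega
  rw [hBfib, card_Ph_fiber hbox, Finset.mul_sum]
  apply Finset.sum_le_sum
  intro j _
  by_cases hne : ((Pout l Θ).filter (fun p => p.1.2 = j)).Nonempty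
  · obtain ⟨p, hp⟩ := hne
    obtain ⟨hpO, hpj⟩ := Finset.mem_filter.1 hp
    have hform1 := hform p hpO
    have hp1 : p.1 = ((c, j) : Site) := by rw [hform1]; simp; omega
    have hmem : ((c, j) : Site) ∈ Θ := by
      have h1 := (mem_cutP.1 (Finset.mem_filter.1 hpO).1).1
      rwa [hp1] at h1
    have h2 := row_two hbox hmem
    have h1 : ((Pout l Θ).filter (fun p => p.1.2 = j)).card ≤ 1 := by
      apply Finset.card_le_one.2
      intro a ha b hb
      have ha2 := hform a (Finset.mem_filter.1 ha).1
      have hb2 := hform b (Finset.mem_filter.1 hb).1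
      have haj := (Finset.mem_filter.1 ha).2
      have hbj := (Finset.mem_filter.1 hb).2
      rw [haj] at ha2
      rw [hbj] at hb2
      rw [ha2, hb2]
    omega
  · rw [Finset.not_nonempty_iff_eq_empty.1 hne]; simp

lemma pout_vert_bound (hbox : ∀ x ∈ Θ, x ∈ lamBox l) (c c' : ℤ)
    (hform : ∀ p ∈ Pout l Θ, p = (((p.1.1, c) : Site), ((p.1.1, c') : Site))) :
    2 * (Pout l Θ).card ≤ (Pv Θ).card := by
  classical
  have hBfib : (Pout l Θ).card =
      ∑ i ∈ Finset.Icc (lamLo l) (lamHi l), ((Pout l Θ).filter (fun p => p.1.1 = i)).card := by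
    apply Finset.card_eq_sum_card_fiberwise
    intro p hp
    have h1 := (mem_cutP.1 (Finset.mem_filter.1 hp).1).1
    have := mem_lamBox.1 (hbox _ h1)
    simp only [Finset.mem_coe, Finset.mem_Icc]; omega
  rw [hBfib, card_Pv_fiber hbox, Finset.mul_sum]
  apply Finset.sum_le_sum
  intro i _
  by_cases hne : ((Pout l Θ).filter (fun p => p.1.1 = i)).Nonempty
  · obtain ⟨p, hp⟩ := hne
    obtain ⟨hpO, hpi⟩ := Finset.mem_filter.1 hp
    have hform1 := hform p hpO
    have hp1 : p.1 = ((i, c) : Site) := by rw [hform1]; simp; omega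
    have hmem : ((i, c) : Site) ∈ Θ := by
      have h1 := (mem_cutP.1 (Finset.mem_filter.1 hpO).1).1
      rwa [hp1] at h1
    have h2 := col_two hbox hmem
    have h1 : ((Pout l Θ).filter (fun p => p.1.1 = i)).card ≤ 1 := by
      apply Finset.card_le_one.2
      intro a ha b hb
      have ha2 := hform a (Finset.mem_filter.1 ha).1
      have hb2 := hform b (Finset.mem_filter.1 hb).1
      have hai := (Finset.mem_filter.1 ha).2
      have hbi := (Finset.mem_filter.1 hb).2
      rw [hai] at ha2
      rw [hbi] at hb2
      rw [ha2, hb2]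
    omega
  · rw [Finset.not_nonempty_iff_eq_empty.1 hne]; simp

lemma pout_cases (hbox : ∀ x ∈ Θ, x ∈ lamBox l) {p : Site × Site} (hp : p ∈ Pout l Θ) :
    (p.1.1 = lamHi l ∧ p = (((lamHi l, p.1.2) : Site), ((lamHi l + 1, p.1.2) : Site))) ∨
    (p.1.1 = lamLo l ∧ p = (((lamLo l, p.1.2) : Site), ((lamLo l - 1, p.1.2) : Site))) ∨
    (p.1.2 = lamHi l ∧ p = (((p.1.1, lamHi l) : Site), ((p.1.1, lamHi l + 1) : Site))) ∨
    (p.1.2 = lamLo l ∧ p = (((p.1.1, lamLo l) : Site), ((p.1.1, lamLo l - 1) : Site))) := by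
  rcases p with ⟨x, y⟩
  obtain ⟨hc, hyb⟩ := Finset.mem_filter.1 hp
  obtain ⟨hx, hyΘ, hyn⟩ := mem_cutP.1 hc
  dsimp only at hx hyΘ hyn hyb ⊢
  have hxb := mem_lamBox.1 (hbox _ hx)
  have hyb2 : ¬ (lamLo l ≤ y.1 ∧ y.1 ≤ lamHi l ∧ lamLo l ≤ y.2 ∧ y.2 ≤ lamHi l) :=
    fun h => hyb (mem_lamBox.2 h)
  rcases mem_nbrs.1 hyn with rfl|rfl|rfl|rfl <;>
    simp only [Prod.mk.injEq, Prod.ext_iff, and_true, true_and] at hyb2 ⊢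
  all_goals omega

lemma theta_subset_box {l : ℕ} {C Θ : Finset Site}
    (hCbox : ∀ x ∈ C, x ∈ lamBox l) (hfill : (↑Θ : Set Site) = fill C) :
    ∀ x ∈ Θ, x ∈ lamBox l := by
  intro x hx
  by_contra hxb
  have hxf : (x : Site) ∈ fill C := by rw [← hfill]; exact hx
  rcases hxf with hxC | hxfin
  · exact hxb (hCbox x hxC)
  have hray : (l1Comp ((↑C : Set Site))ᶜ x).Infinite := by
    have hx' : ¬ (lamLo l ≤ x.1 ∧ x.1 ≤ lamHi l ∧ lamLo l ≤ x.2 ∧ x.2 ≤ lamHi l) :=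
      fun h => hxb (mem_lamBox.2 h)
    have hdir : x.1 < lamLo l ∨ lamHi l < x.1 ∨ x.2 < lamLo l ∨ lamHi l < x.2 := by omega
    have hgen : ∀ e : Site, |e.1| + |e.2| = 1 →
        (∀ k : ℕ, ((x.1 + k*e.1, x.2 + k*e.2) : Site) ∉ lamBox l) →
        (l1Comp ((↑C : Set Site))ᶜ x).Infinite := by
      intro e he hout
      exact ray_infinite he (fun k => fun hc => hout k (hCbox _ hc))
    rcases hdir with h|h|h|h
    · refine hgen ((-1 : ℤ), (0 : ℤ)) (by norm_num) (fun k hk => ?_)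
      have := mem_lamBox.1 hk; simp only at this; omega
    · refine hgen ((1 : ℤ), (0 : ℤ)) (by norm_num) (fun k hk => ?_)
      have := mem_lamBox.1 hk; simp only at this; omega
    · refine hgen ((0 : ℤ), (-1 : ℤ)) (by norm_num) (fun k hk => ?_)
      have := mem_lamBox.1 hk; simp only at this; omega
    · refine hgen ((0 : ℤ), (1 : ℤ)) (by norm_num) (fun k hk => ?_)
      have := mem_lamBox.1 hk; simp only at this; omega
  exact hray hxfin

lemma bd_in_C {C Θ : Finset Site} (hfill : (↑Θ : Set Site) = fill C) {x y : Site}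
    (hx : x ∈ Θ) (hy : y ∉ Θ) (hxy : d1 x y = 1) : x ∈ C := by
  by_contra hxC
  have hxf : (x : Site) ∈ fill C := by rw [← hfill]; exact hx
  rcases hxf with h | h
  · exact hxC h
  have hyf : (y : Site) ∉ fill C := by rw [← hfill]; simpa using hy
  have hyfin : ¬ (l1Comp ((↑C : Set Site))ᶜ y).Finite := fun hf => hyf (Or.inr hf)
  apply hyfin
  exact Set.Finite.subset h (l1Comp_mono_adj (by simpa using hxC) hxy)

lemma C_subset_theta {C Θ : Finset Site} (hfill : (↑Θ : Set Site) = fill C) :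
    ∀ x ∈ C, x ∈ Θ := by
  intro x hx
  have : (x : Site) ∈ fill C := Or.inl (by simpa using hx)
  rw [← hfill] at this; simpa using this

lemma ray_hits {C : Finset Site} {x : Site} (hx : x ∈ fill C) {e : Site}
    (he : |e.1| + |e.2| = 1) :
    ∃ k : ℕ, ((x.1 + k*e.1, x.2 + k*e.2) : Site) ∈ C := by
  by_contra hno
  push_neg at hno
  have hS : ∀ k : ℕ, ((x.1 + k*e.1, x.2 + k*e.2) : Site) ∈ ((↑C : Set Site))ᶜ :=
    fun k => by simpa using hno k
  have hinf := ray_infinite he hS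
  rcases hx with h | h
  · exact (hno 0) (by simpa using h)
  · exact hinf h

lemma energy_bound {l : ℕ} (ω : Site → ℝ) (σ : Site → ℤ) (Θ : Finset Site)
    (hbox : ∀ x ∈ Θ, x ∈ lamBox l)
    (hint : ∀ x y : Site, x ∈ lamBox l → y ∈ lamBox l → y ∈ nbrs x →
      ¬((x ∈ Θ) ↔ (y ∈ Θ)) → σ x * σ y = -1)
    (hbd : ∀ x y : Site, x ∈ Θ → y ∈ nbrs x → y ∉ lamBox l → (σ x : ℝ) * ω y ≤ 1) :
    2 * ((Pin l Θ).card : ℝ) - 2 * ((Pout l Θ).card : ℝ) ≤ dH l ω [Θ] σ := by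
  classical
  have hσ'f : [Θ].foldr flipC σ = flipC Θ σ := rfl
  rw [dH, hσ'f]
  set σ' := flipC Θ σ with hσ'def
  have hflip_in : ∀ x, x ∈ Θ → σ' x = - σ x := fun x hx => by simp [hσ'def, flipC, hx]
  have hflip_out : ∀ x, x ∉ Θ → σ' x = σ x := fun x hx => by simp [hσ'def, flipC, hx]
  -- the interaction part
  have hterm : ∀ x ∈ lamBox l, ∀ y ∈ (nbrs x).filter (· ∈ lamBox l),
      ((σ x * σ y : ℤ) : ℝ) - ((σ' x * σ' y : ℤ) : ℝ)
        = if ((x ∈ Θ) ↔ (y ∈ Θ)) then 0 else -2 := by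
    intro x hx y hy
    obtain ⟨hyn, hyb⟩ := Finset.mem_filter.1 hy
    by_cases h1 : x ∈ Θ <;> by_cases h2 : y ∈ Θ
    · rw [if_pos (iff_of_true h1 h2), hflip_in _ h1, hflip_in _ h2]; push_cast; ring
    · rw [if_neg (fun h => h2 (h.1 h1)), hflip_in _ h1, hflip_out _ h2]
      have hh : ((σ x * σ y : ℤ) : ℝ) = -1 := by
        exact_mod_cast congrArg (fun n : ℤ => (n : ℝ))
          (hint x y hx hyb hyn (fun h => h2 (h.1 h1)))
      push_cast at hh ⊢
      linarith
    · rw [if_neg (fun h => h1 (h.2 h2)), hflip_out _ h1, hflip_in _ h2]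
      have hh : ((σ x * σ y : ℤ) : ℝ) = -1 := by
        exact_mod_cast congrArg (fun n : ℤ => (n : ℝ))
          (hint x y hx hyb hyn (fun h => h1 (h.2 h2)))
      push_cast at hh ⊢
      linarith
    · rw [if_pos (iff_of_false h1 h2), hflip_out _ h1, hflip_out _ h2]; push_cast; ring
  set Qord : Finset (Site × Site) := (lamBox l).biUnion
    (fun x => ((nbrs x).filter (fun y => y ∈ lamBox l ∧ ¬((x ∈ Θ) ↔ (y ∈ Θ)))).image
      (fun y => (x, y))) with hQdef
  have hQcard : Qord.card = ∑ x ∈ lamBox l,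
      (((nbrs x).filter (fun y => y ∈ lamBox l ∧ ¬((x ∈ Θ) ↔ (y ∈ Θ)))).card) := by
    rw [hQdef, Finset.card_biUnion]
    · exact Finset.sum_congr rfl (fun x _ => Finset.card_image_of_injective _
        (fun a b h => (Prod.ext_iff.1 h).2))
    · intro a _ b _ hab
      simp only [Finset.disjoint_left, Finset.mem_image, Finset.mem_filter]
      rintro p ⟨u, _, rfl⟩ ⟨v, _, hv⟩
      exact hab ((Prod.ext_iff.1 hv).1.symm)
  have hmemQ : ∀ p : Site × Site, p ∈ Qord ↔
      p.1 ∈ lamBox l ∧ p.2 ∈ lamBox l ∧ p.2 ∈ nbrs p.1 ∧ ¬((p.1 ∈ Θ) ↔ (p.2 ∈ Θ)) := by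
    rintro ⟨x, y⟩
    simp only [hQdef, Finset.mem_biUnion, Finset.mem_image, Finset.mem_filter, Prod.mk.injEq]
    constructor
    · rintro ⟨a, ha, b, ⟨hb1, hb2, hb3⟩, rfl, rfl⟩
      exact ⟨ha, hb2, hb1, hb3⟩
    · rintro ⟨h1, h2, h3, h4⟩
      exact ⟨x, h1, y, ⟨h3, h2, h4⟩, rfl, rfl⟩
  have hmemPin : ∀ p : Site × Site, p ∈ Pin l Θ ↔
      p.1 ∈ Θ ∧ p.2 ∉ Θ ∧ p.2 ∈ nbrs p.1 ∧ p.2 ∈ lamBox l := by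
    intro p
    rw [Pin, Finset.mem_filter, mem_cutP]
    tauto
  have hQord2 : Qord.card = 2 * (Pin l Θ).card := by
    have hsplit : Qord = Pin l Θ ∪ (Pin l Θ).image Prod.swap := by
      ext p
      rcases p with ⟨x, y⟩
      rw [hmemQ, Finset.mem_union, hmemPin, Finset.mem_image]
      constructor
      · rintro ⟨h1, h2, h3, h4⟩
        by_cases hx : x ∈ Θ
        · exact Or.inl ⟨hx, fun hy => h4 (iff_of_true hx hy), h3, h2⟩
        · refine Or.inr ⟨(y, x), ?_, rfl⟩
          rw [hmemPin]
          have hy : y ∈ Θ := by tauto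
          exact ⟨hy, hx, nbrs_symm h3, h1⟩
      · rintro (⟨h1, h2, h3, h4⟩ | ⟨⟨a, b⟩, hq, heq⟩)
        · exact ⟨hbox _ h1, h4, h3, fun h => h2 (h.1 h1)⟩
        · obtain ⟨rfl, rfl⟩ := Prod.ext_iff.1 heq
          rw [hmemPin] at hq
          obtain ⟨h1, h2, h3, h4⟩ := hq
          exact ⟨h4, hbox _ h1, nbrs_symm h3, fun h => h2 (h.2 h1)⟩
    have hdisj : Disjoint (Pin l Θ) ((Pin l Θ).image Prod.swap) := by
      simp only [Finset.disjoint_left, Finset.mem_image]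
      rintro p hp ⟨q, hq, rfl⟩
      rw [hmemPin] at hp hq
      exact hq.2.1 hp.1
    rw [hsplit, Finset.card_union_of_disjoint hdisj,
      Finset.card_image_of_injective _ Prod.swap_injective]
    omega
  have hS1 : (∑ x ∈ lamBox l, ∑ y ∈ (nbrs x).filter (· ∈ lamBox l), ((σ x * σ y : ℤ) : ℝ))
      - (∑ x ∈ lamBox l, ∑ y ∈ (nbrs x).filter (· ∈ lamBox l), ((σ' x * σ' y : ℤ) : ℝ))
      = -2 * (2 * ((Pin l Θ).card : ℝ)) := by
    rw [← Finset.sum_sub_distrib]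
    have h1 : ∀ x ∈ lamBox l,
        (∑ y ∈ (nbrs x).filter (· ∈ lamBox l), ((σ x * σ y : ℤ) : ℝ))
          - (∑ y ∈ (nbrs x).filter (· ∈ lamBox l), ((σ' x * σ' y : ℤ) : ℝ))
        = -2 * (((nbrs x).filter (fun y => y ∈ lamBox l ∧ ¬((x ∈ Θ) ↔ (y ∈ Θ)))).card : ℝ) := by
      intro x hx
      rw [← Finset.sum_sub_distrib]
      rw [Finset.sum_congr rfl (fun y hy => hterm x hx y hy)]
      have : ∀ y ∈ (nbrs x).filter (· ∈ lamBox l),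
          (if ((x ∈ Θ) ↔ (y ∈ Θ)) then (0:ℝ) else -2)
            = if ¬((x ∈ Θ) ↔ (y ∈ Θ)) then (-2:ℝ) else 0 := by
        intro y _
        by_cases h : ((x ∈ Θ) ↔ (y ∈ Θ)) <;> simp [h]
      rw [Finset.sum_congr rfl this, ← Finset.sum_filter, Finset.filter_filter,
        Finset.sum_const, nsmul_eq_mul]
      have : ((nbrs x).filter (fun y => y ∈ lamBox l ∧ ¬((x ∈ Θ) ↔ (y ∈ Θ))))
          = ((nbrs x).filter (fun a => a ∈ lamBox l ∧ ¬(x ∈ Θ ↔ a ∈ Θ))) := rfl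
      rw [this]
      ring
    rw [Finset.sum_congr rfl h1, ← Finset.mul_sum, ← Nat.cast_sum, ← hQcard, hQord2]
    push_cast
    ring
  -- the boundary part
  have hPoutcard : (Pout l Θ).card = ∑ x ∈ Θ, ((nbrs x).filter (· ∉ lamBox l)).card := by
    have : Pout l Θ = Θ.biUnion
        (fun x => ((nbrs x).filter (· ∉ lamBox l)).image (fun y => (x, y))) := by
      ext p
      rcases p with ⟨x, y⟩
      rw [Pout, Finset.mem_filter, mem_cutP]
      simp only [Finset.mem_biUnion, Finset.mem_image, Finset.mem_filter, Prod.mk.injEq]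
      constructor
      · rintro ⟨⟨h1, h2, h3⟩, h4⟩
        exact ⟨x, h1, y, ⟨h3, h4⟩, rfl, rfl⟩
      · rintro ⟨a, ha, b, ⟨hb1, hb2⟩, rfl, rfl⟩
        exact ⟨⟨ha, fun h => hb2 (hbox _ h), hb1⟩, hb2⟩
    rw [this, Finset.card_biUnion]
    · exact Finset.sum_congr rfl (fun x _ => Finset.card_image_of_injective _
        (fun a b h => (Prod.ext_iff.1 h).2))
    · intro a _ b _ hab
      simp only [Finset.disjoint_left, Finset.mem_image, Finset.mem_filter]
      rintro p ⟨u, _, rfl⟩ ⟨v, _, hv⟩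
      exact hab ((Prod.ext_iff.1 hv).1.symm)
  have hS2 : (∑ x ∈ lamBox l, ∑ y ∈ (nbrs x).filter (· ∉ lamBox l), (σ x : ℝ) * ω y)
      - (∑ x ∈ lamBox l, ∑ y ∈ (nbrs x).filter (· ∉ lamBox l), (σ' x : ℝ) * ω y)
      ≤ 2 * ((Pout l Θ).card : ℝ) := by
    rw [← Finset.sum_sub_distrib]
    have h1 : ∀ x ∈ lamBox l,
        (∑ y ∈ (nbrs x).filter (· ∉ lamBox l), (σ x : ℝ) * ω y)
          - (∑ y ∈ (nbrs x).filter (· ∉ lamBox l), (σ' x : ℝ) * ω y)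
        ≤ if x ∈ Θ then 2 * (((nbrs x).filter (· ∉ lamBox l)).card : ℝ) else 0 := by
      intro x _
      rw [← Finset.sum_sub_distrib]
      by_cases hx : x ∈ Θ
      · rw [if_pos hx]
        have : 2 * (((nbrs x).filter (· ∉ lamBox l)).card : ℝ)
            = ∑ _y ∈ (nbrs x).filter (· ∉ lamBox l), (2:ℝ) := by
          rw [Finset.sum_const, nsmul_eq_mul]; ring
        rw [this]
        apply Finset.sum_le_sum
        intro y hy
        obtain ⟨hyn, hyb⟩ := Finset.mem_filter.1 hy
        rw [hflip_in _ hx]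
        have := hbd x y hx hyn hyb
        push_cast
        linarith
      · rw [if_neg hx]
        rw [hflip_out _ hx]
        simp
    calc (∑ x ∈ lamBox l, ((∑ y ∈ (nbrs x).filter (· ∉ lamBox l), (σ x : ℝ) * ω y)
          - (∑ y ∈ (nbrs x).filter (· ∉ lamBox l), (σ' x : ℝ) * ω y)))
        ≤ ∑ x ∈ lamBox l, (if x ∈ Θ then 2 * (((nbrs x).filter (· ∉ lamBox l)).card : ℝ) else 0) :=
          Finset.sum_le_sum h1
      _ = ∑ x ∈ (lamBox l).filter (· ∈ Θ), 2 * (((nbrs x).filter (· ∉ lamBox l)).card : ℝ) :=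
          (Finset.sum_filter _ _).symm
      _ = ∑ x ∈ Θ, 2 * (((nbrs x).filter (· ∉ lamBox l)).card : ℝ) := by
          congr 1
          ext x
          simp only [Finset.mem_filter]
          exact ⟨fun h => h.2, fun h => ⟨hbox _ h, h⟩⟩
      _ = 2 * ((Pout l Θ).card : ℝ) := by
          rw [hPoutcard, ← Finset.mul_sum, Nat.cast_sum]
  -- assemble
  rw [Ham, Ham]
  set A1 := (∑ x ∈ lamBox l, ∑ y ∈ (nbrs x).filter (· ∈ lamBox l), ((σ x * σ y : ℤ) : ℝ))
  set A2 := (∑ x ∈ lamBox l, ∑ y ∈ (nbrs x).filter (· ∈ lamBox l), ((σ' x * σ' y : ℤ) : ℝ))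
  set B1 := (∑ x ∈ lamBox l, ∑ y ∈ (nbrs x).filter (· ∉ lamBox l), (σ x : ℝ) * ω y)
  set B2 := (∑ x ∈ lamBox l, ∑ y ∈ (nbrs x).filter (· ∉ lamBox l), (σ' x : ℝ) * ω y)
  linarith

lemma d1_step_s {p q : Site} (h : d1 p q = 1) : q.2 ≤ p.2 + 1 ∧ p.2 ≤ q.2 + 1 := by
  simp only [d1] at h
  rcases abs_cases (p.1 - q.1) with ⟨h1,_⟩|⟨h1,_⟩ <;> rcases abs_cases (p.2 - q.2) with ⟨h2,_⟩|⟨h2,_⟩ <;> omega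

lemma icc_card (a b : ℤ) : (Finset.Icc a b).card = (b + 1 - a).toNat := Int.card_Icc a b

end AuxStmt10

/-- If an (ε)-contour `γ` at `σ` in `Λ(l)` encloses the origin
(`0 ∈ Θ(γ)`) and `|γ| < 2l`, then `Δ_γ H^ω(σ) ≥ 2|γ|/9`. -/
theorem stmt10 (l : ℕ) (σ : Site → ℤ) (hσ : ∀ x ∈ lamBox l, σ x = 1 ∨ σ x = -1)
    (ε : ℤ) (hε : ε = 1 ∨ ε = -1) (ω : Site → ℝ)
    (hω : ∀ y ∈ extBdry l, |ω y| ≤ 1)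
    (Θ : Finset Site) (hc : IsEContour l σ ε Θ)
    (h0 : ((0 : ℤ), (0 : ℤ)) ∈ Θ) (hlen : (contourOf Θ).card < 2 * l) :
    2 * ((contourOf Θ).card : ℝ) / 9 ≤ dH l ω [Θ] σ := by
  classical
  obtain ⟨C, hcl, hfill⟩ := hc
  obtain ⟨hCne, hCprop, hCconn, hCmax⟩ := hcl
  have hCbox : ∀ x ∈ C, x ∈ lamBox l := fun x hx => (hCprop x hx).1
  have hbox : ∀ x ∈ Θ, x ∈ lamBox l := theta_subset_box hCbox hfill
  have hCθ : ∀ x ∈ C, x ∈ Θ := C_subset_theta hfill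
  have hl : 1 ≤ l := by omega
  obtain ⟨hlo0, hhi0, hspan, hlobound, hhibound⟩ := lo_hi hl
  -- the two energy hypotheses
  have hint : ∀ x y : Site, x ∈ lamBox l → y ∈ lamBox l → y ∈ nbrs x →
      ¬((x ∈ Θ) ↔ (y ∈ Θ)) → σ x * σ y = -1 := by
    intro x y hxb hyb hyn hx
    rcases Classical.em (x ∈ Θ) with hxΘ | hxΘ
    · have hyΘ : y ∉ Θ := fun hy => hx (iff_of_true hxΘ hy)
      have hxC : x ∈ C := bd_in_C hfill hxΘ hyΘ (d1_of_nbrs hyn)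
      have hσx : σ x = ε := (hCprop x hxC).2
      have hyC : y ∉ C := fun h => hyΘ (hCθ _ h)
      have hσy : σ y = -ε := by
        have hne : σ y ≠ ε := fun heq => hyC (hCmax y hyb heq ⟨x, hxC, d1_of_nbrs hyn⟩)
        rcases hσ y hyb with h | h <;> rcases hε with rfl | rfl <;> omega
      rcases hε with rfl | rfl <;> rw [hσx, hσy] <;> norm_num
    · have hyΘ : y ∈ Θ := by tauto
      have hyC : y ∈ C := bd_in_C hfill hyΘ hxΘ (d1_of_nbrs (nbrs_symm hyn))
      have hσy : σ y = ε := (hCprop y hyC).2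
      have hxC : x ∉ C := fun h => hxΘ (hCθ _ h)
      have hσx : σ x = -ε := by
        have hne : σ x ≠ ε := fun heq =>
          hxC (hCmax x hxb heq ⟨y, hyC, d1_of_nbrs (nbrs_symm hyn)⟩)
        rcases hσ x hxb with h | h <;> rcases hε with rfl | rfl <;> omega
      rcases hε with rfl | rfl <;> rw [hσx, hσy] <;> norm_num
  have hbd : ∀ x y : Site, x ∈ Θ → y ∈ nbrs x → y ∉ lamBox l → (σ x : ℝ) * ω y ≤ 1 := by
    intro x y hxΘ hyn hyb
    have hyΘ : y ∉ Θ := fun h => hyb (hbox _ h)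
    have hxC : x ∈ C := bd_in_C hfill hxΘ hyΘ (d1_of_nbrs hyn)
    have hσx : σ x = ε := (hCprop x hxC).2
    have hωy : |ω y| ≤ 1 := hω y ⟨hyb, x, hbox _ hxΘ, d1_of_nbrs hyn⟩
    have h1 := abs_le.1 hωy
    rcases hε with rfl | rfl <;> rw [hσx] <;> push_cast <;> linarith [h1.1, h1.2]
  have hEnergy := energy_bound ω σ Θ hbox hint hbd
  have hcards := card_in_out l Θ
  have hγ : (contourOf Θ).card = (cutP Θ).card := card_contour Θ
  by_cases hB : (Pout l Θ).card = 0
  · have hA : (Pin l Θ).card = (cutP Θ).card := by omega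
    have h2 : ((contourOf Θ).card : ℝ) = ((Pin l Θ).card : ℝ) := by rw [hγ, ← hA]
    rw [h2]
    have hBr : ((Pout l Θ).card : ℝ) = 0 := by rw [hB]; norm_num
    have hge : (0:ℝ) ≤ ((Pin l Θ).card : ℝ) := by positivity
    linarith
  · obtain ⟨p, hp⟩ : (Pout l Θ).Nonempty := Finset.card_pos.1 (by omega)
    have hp1Θ : p.1 ∈ Θ := (mem_cutP.1 (Finset.mem_filter.1 hp).1).1
    -- edge sites belong to the cluster C
    have hLC : ∀ x ∈ Θ, x.1 = lamLo l → x ∈ C := by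
      intro x hx h1
      refine bd_in_C hfill hx (y := ((x.1 - 1, x.2) : Site)) ?_ ?_
      · intro hy; have := mem_lamBox.1 (hbox _ hy); simp only at this; omega
      · exact d1_of_nbrs (mem_nbrs.2 (Or.inr (Or.inl rfl)))
    have hRC : ∀ x ∈ Θ, x.1 = lamHi l → x ∈ C := by
      intro x hx h1
      refine bd_in_C hfill hx (y := ((x.1 + 1, x.2) : Site)) ?_ ?_
      · intro hy; have := mem_lamBox.1 (hbox _ hy); simp only at this; omega
      · exact d1_of_nbrs (mem_nbrs.2 (Or.inl rfl))
    have hTC : ∀ x ∈ Θ, x.2 = lamHi l → x ∈ C := by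
      intro x hx h1
      refine bd_in_C hfill hx (y := ((x.1, x.2 + 1) : Site)) ?_ ?_
      · intro hy; have := mem_lamBox.1 (hbox _ hy); simp only at this; omega
      · exact d1_of_nbrs (mem_nbrs.2 (Or.inr (Or.inr (Or.inl rfl))))
    have hBC : ∀ x ∈ Θ, x.2 = lamLo l → x ∈ C := by
      intro x hx h1
      refine bd_in_C hfill hx (y := ((x.1, x.2 - 1) : Site)) ?_ ?_
      · intro hy; have := mem_lamBox.1 (hbox _ hy); simp only at this; omega
      · exact d1_of_nbrs (mem_nbrs.2 (Or.inr (Or.inr (Or.inr rfl))))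
    -- rays from the origin hit C
    have h0fill : (((0:ℤ),(0:ℤ)) : Site) ∈ fill C := by rw [← hfill]; simpa using h0
    obtain ⟨kR, hkR⟩ : ∃ k : ℕ, (((k:ℤ), (0:ℤ)) : Site) ∈ C := by
      obtain ⟨k, hk⟩ := ray_hits h0fill (e := (((1:ℤ),(0:ℤ)) : Site)) (by norm_num)
      exact ⟨k, by simpa using hk⟩
    obtain ⟨kL, hkL⟩ : ∃ k : ℕ, ((-(k:ℤ), (0:ℤ)) : Site) ∈ C := by
      obtain ⟨k, hk⟩ := ray_hits h0fill (e := (((-1:ℤ),(0:ℤ)) : Site)) (by norm_num)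
      exact ⟨k, by simpa using hk⟩
    obtain ⟨kU, hkU⟩ : ∃ k : ℕ, (((0:ℤ), (k:ℤ)) : Site) ∈ C := by
      obtain ⟨k, hk⟩ := ray_hits h0fill (e := (((0:ℤ),(1:ℤ)) : Site)) (by norm_num)
      exact ⟨k, by simpa using hk⟩
    obtain ⟨kD, hkD⟩ : ∃ k : ℕ, (((0:ℤ), -(k:ℤ)) : Site) ∈ C := by
      obtain ⟨k, hk⟩ := ray_hits h0fill (e := (((0:ℤ),(-1:ℤ)) : Site)) (by norm_num)
      exact ⟨k, by simpa using hk⟩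
    -- occupancy of intervals of columns / rows
    have hcol_occ : ∀ a b : Site, a ∈ C → b ∈ C → ∀ m : ℤ, a.1 ≤ m → m ≤ b.1 →
        ∃ j, ((m, j) : Site) ∈ Θ := by
      intro a b ha hb m h1 h2
      obtain ⟨q, hqC, hqm⟩ := exists_between_chain C hCconn Prod.fst
        (fun u v h => d1_step_f h) ha hb h1 h2
      refine ⟨q.2, ?_⟩
      have he : ((m, q.2) : Site) = q := Prod.ext_iff.2 ⟨hqm.symm, rfl⟩
      rw [he]; exact hCθ _ hqC
    have hrow_occ : ∀ a b : Site, a ∈ C → b ∈ C → ∀ m : ℤ, a.2 ≤ m → m ≤ b.2 →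
        ∃ i, ((i, m) : Site) ∈ Θ := by
      intro a b ha hb m h1 h2
      obtain ⟨q, hqC, hqm⟩ := exists_between_chain C hCconn Prod.snd
        (fun u v h => d1_step_s h) ha hb h1 h2
      refine ⟨q.1, ?_⟩
      have he : ((q.1, m) : Site) = q := Prod.ext_iff.2 ⟨rfl, hqm.symm⟩
      rw [he]; exact hCθ _ hqC
    have hCARD : ∀ Rs Cs : Finset ℤ, Rs ⊆ Finset.Icc (lamLo l) (lamHi l) →
        Cs ⊆ Finset.Icc (lamLo l) (lamHi l) →
        (∀ j ∈ Rs, ∃ i, ((i, j) : Site) ∈ Θ) → (∀ i ∈ Cs, ∃ j, ((i, j) : Site) ∈ Θ) →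
        2 * Rs.card + 2 * Cs.card ≤ (cutP Θ).card := by
      intro Rs Cs h1 h2 h3 h4
      have ha := surp_rows hbox Rs h1 h3
      have hb := surp_cols hbox Cs h2 h4
      have hc := card_h_v Θ
      omega
    have hlt : (cutP Θ).card < 2 * l := by rw [← hγ]; exact hlen
    -- pairwise exclusion of touched sides
    have hexLR : (∃ x ∈ Θ, x.1 = lamLo l) → (∃ x ∈ Θ, x.1 = lamHi l) → False := by
      rintro ⟨a, haΘ, ha1⟩ ⟨b, hbΘ, hb1⟩
      have haC := hLC a haΘ ha1
      have hbC := hRC b hbΘ hb1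
      have habox := mem_lamBox.1 (hbox _ haΘ)
      have hocc : ∀ i ∈ Finset.Icc (lamLo l) (lamHi l), ∃ j, ((i, j) : Site) ∈ Θ := by
        intro i hi
        rw [Finset.mem_Icc] at hi
        exact hcol_occ a b haC hbC i (by omega) (by omega)
      have hrowS : ∀ j ∈ ({a.2} : Finset ℤ), ∃ i, ((i, j) : Site) ∈ Θ := by
        intro j hj
        rw [Finset.mem_singleton] at hj
        subst hj
        exact ⟨a.1, haΘ⟩
      have hcard := hCARD {a.2} (Finset.Icc (lamLo l) (lamHi l))
        (by simp only [Finset.singleton_subset_iff, Finset.mem_Icc]; omega)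
        (Finset.Subset.refl _) hrowS hocc
      rw [icc_card] at hcard
      omega
    have hexLT : (∃ x ∈ Θ, x.1 = lamLo l) → (∃ x ∈ Θ, x.2 = lamHi l) → False := by
      rintro ⟨a, haΘ, ha1⟩ ⟨c, hcΘ, hc2⟩
      have haC := hLC a haΘ ha1
      have hcC := hTC c hcΘ hc2
      have hoccC : ∀ i ∈ Finset.Icc (lamLo l) 0, ∃ j, ((i, j) : Site) ∈ Θ := by
        intro i hi
        rw [Finset.mem_Icc] at hi
        refine hcol_occ a (((kR:ℤ), (0:ℤ)) : Site) haC hkR i (by omega) ?_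
        show i ≤ (kR:ℤ); omega
      have hoccR : ∀ j ∈ Finset.Icc 0 (lamHi l), ∃ i, ((i, j) : Site) ∈ Θ := by
        intro j hj
        rw [Finset.mem_Icc] at hj
        refine hrow_occ (((0:ℤ), -(kD:ℤ)) : Site) c hkD hcC j ?_ (by omega)
        show -(kD:ℤ) ≤ j; omega
      have hcard := hCARD (Finset.Icc 0 (lamHi l)) (Finset.Icc (lamLo l) 0)
        (Finset.Icc_subset_Icc hlo0 (le_refl _)) (Finset.Icc_subset_Icc (le_refl _) hhi0)
        hoccR hoccC
      rw [icc_card, icc_card] at hcard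
      omega
    have hexLB : (∃ x ∈ Θ, x.1 = lamLo l) → (∃ x ∈ Θ, x.2 = lamLo l) → False := by
      rintro ⟨a, haΘ, ha1⟩ ⟨d, hdΘ, hd2⟩
      have haC := hLC a haΘ ha1
      have hdC := hBC d hdΘ hd2
      have hoccC : ∀ i ∈ Finset.Icc (lamLo l) 0, ∃ j, ((i, j) : Site) ∈ Θ := by
        intro i hi
        rw [Finset.mem_Icc] at hi
        refine hcol_occ a (((kR:ℤ), (0:ℤ)) : Site) haC hkR i (by omega) ?_
        show i ≤ (kR:ℤ); omega
      have hoccR : ∀ j ∈ Finset.Icc (lamLo l) 0, ∃ i, ((i, j) : Site) ∈ Θ := by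
        intro j hj
        rw [Finset.mem_Icc] at hj
        refine hrow_occ d (((0:ℤ), (kU:ℤ)) : Site) hdC hkU j (by omega) ?_
        show j ≤ (kU:ℤ); omega
      have hcard := hCARD (Finset.Icc (lamLo l) 0) (Finset.Icc (lamLo l) 0)
        (Finset.Icc_subset_Icc (le_refl _) hhi0) (Finset.Icc_subset_Icc (le_refl _) hhi0)
        hoccR hoccC
      rw [icc_card] at hcard
      omega
    have hexRT : (∃ x ∈ Θ, x.1 = lamHi l) → (∃ x ∈ Θ, x.2 = lamHi l) → False := by
      rintro ⟨b, hbΘ, hb1⟩ ⟨c, hcΘ, hc2⟩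
      have hbC := hRC b hbΘ hb1
      have hcC := hTC c hcΘ hc2
      have hoccC : ∀ i ∈ Finset.Icc 0 (lamHi l), ∃ j, ((i, j) : Site) ∈ Θ := by
        intro i hi
        rw [Finset.mem_Icc] at hi
        refine hcol_occ ((-(kL:ℤ), (0:ℤ)) : Site) b hkL hbC i ?_ (by omega)
        show -(kL:ℤ) ≤ i; omega
      have hoccR : ∀ j ∈ Finset.Icc 0 (lamHi l), ∃ i, ((i, j) : Site) ∈ Θ := by
        intro j hj
        rw [Finset.mem_Icc] at hj
        refine hrow_occ (((0:ℤ), -(kD:ℤ)) : Site) c hkD hcC j ?_ (by omega)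
        show -(kD:ℤ) ≤ j; omega
      have hcard := hCARD (Finset.Icc 0 (lamHi l)) (Finset.Icc 0 (lamHi l))
        (Finset.Icc_subset_Icc hlo0 (le_refl _)) (Finset.Icc_subset_Icc hlo0 (le_refl _))
        hoccR hoccC
      rw [icc_card] at hcard
      omega
    have hexRB : (∃ x ∈ Θ, x.1 = lamHi l) → (∃ x ∈ Θ, x.2 = lamLo l) → False := by
      rintro ⟨b, hbΘ, hb1⟩ ⟨d, hdΘ, hd2⟩
      have hbC := hRC b hbΘ hb1
      have hdC := hBC d hdΘ hd2
      have hoccC : ∀ i ∈ Finset.Icc 0 (lamHi l), ∃ j, ((i, j) : Site) ∈ Θ := by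
        intro i hi
        rw [Finset.mem_Icc] at hi
        refine hcol_occ ((-(kL:ℤ), (0:ℤ)) : Site) b hkL hbC i ?_ (by omega)
        show -(kL:ℤ) ≤ i; omega
      have hoccR : ∀ j ∈ Finset.Icc (lamLo l) 0, ∃ i, ((i, j) : Site) ∈ Θ := by
        intro j hj
        rw [Finset.mem_Icc] at hj
        refine hrow_occ d (((0:ℤ), (kU:ℤ)) : Site) hdC hkU j (by omega) ?_
        show j ≤ (kU:ℤ); omega
      have hcard := hCARD (Finset.Icc (lamLo l) 0) (Finset.Icc 0 (lamHi l))
        (Finset.Icc_subset_Icc (le_refl _) hhi0) (Finset.Icc_subset_Icc hlo0 (le_refl _))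
        hoccR hoccC
      rw [icc_card, icc_card] at hcard
      omega
    have hexTB : (∃ x ∈ Θ, x.2 = lamHi l) → (∃ x ∈ Θ, x.2 = lamLo l) → False := by
      rintro ⟨c, hcΘ, hc2⟩ ⟨d, hdΘ, hd2⟩
      have hcC := hTC c hcΘ hc2
      have hdC := hBC d hdΘ hd2
      have hcbox := mem_lamBox.1 (hbox _ hcΘ)
      have hoccR : ∀ j ∈ Finset.Icc (lamLo l) (lamHi l), ∃ i, ((i, j) : Site) ∈ Θ := by
        intro j hj
        rw [Finset.mem_Icc] at hj
        exact hrow_occ d c hdC hcC j (by omega) (by omega)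
      have hoccC : ∀ i ∈ ({c.1} : Finset ℤ), ∃ j, ((i, j) : Site) ∈ Θ := by
        intro i hi
        rw [Finset.mem_singleton] at hi
        subst hi
        exact ⟨c.2, hcΘ⟩
      have hcard := hCARD (Finset.Icc (lamLo l) (lamHi l)) {c.1}
        (Finset.Subset.refl _)
        (by simp only [Finset.singleton_subset_iff, Finset.mem_Icc]; omega)
        hoccR hoccC
      rw [icc_card] at hcard
      omega
    -- reduce to the counting estimate
    suffices hAB : (Pout l Θ).card + l ≤ (Pin l Θ).card by
      have h3 : ((Pout l Θ).card : ℝ) + l ≤ ((Pin l Θ).card : ℝ) := by exact_mod_cast hAB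
      have h4 : ((contourOf Θ).card : ℝ) < 2 * l := by exact_mod_cast hlen
      have h5 : ((contourOf Θ).card : ℝ) = ((Pin l Θ).card : ℝ) + ((Pout l Θ).card : ℝ) := by
        rw [hγ, ← hcards]; push_cast; ring
      have h7 : (0:ℝ) ≤ (l:ℝ) := by positivity
      linarith
    rcases pout_cases hbox hp with ⟨hR1, _⟩ | ⟨hL1, _⟩ | ⟨hT1, _⟩ | ⟨hB1, _⟩
    · -- touches the right side
      have hnL : ∀ x ∈ Θ, ¬ x.1 = lamLo l := fun x hx h => hexLR ⟨x, hx, h⟩ ⟨p.1, hp1Θ, hR1⟩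
      have hnT : ∀ x ∈ Θ, ¬ x.2 = lamHi l := fun x hx h => hexRT ⟨p.1, hp1Θ, hR1⟩ ⟨x, hx, h⟩
      have hnB : ∀ x ∈ Θ, ¬ x.2 = lamLo l := fun x hx h => hexRB ⟨p.1, hp1Θ, hR1⟩ ⟨x, hx, h⟩
      have hform : ∀ q ∈ Pout l Θ,
          q = (((lamHi l, q.1.2) : Site), ((lamHi l + 1, q.1.2) : Site)) := by
        intro q hq
        have hq1Θ : q.1 ∈ Θ := (mem_cutP.1 (Finset.mem_filter.1 hq).1).1
        rcases pout_cases hbox hq with ⟨_, h⟩ | ⟨h1, _⟩ | ⟨h1, _⟩ | ⟨h1, _⟩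
        · exact h
        · exact absurd h1 (hnL _ hq1Θ)
        · exact absurd h1 (hnT _ hq1Θ)
        · exact absurd h1 (hnB _ hq1Θ)
      have hhoriz := pout_horiz_bound hbox _ _ hform
      have hbC := hRC p.1 hp1Θ hR1
      have hocc : ∀ i ∈ Finset.Icc 0 (lamHi l), ∃ j, ((i, j) : Site) ∈ Θ := by
        intro i hi
        rw [Finset.mem_Icc] at hi
        refine hcol_occ ((-(kL:ℤ), (0:ℤ)) : Site) p.1 hkL hbC i ?_ (by omega)
        show -(kL:ℤ) ≤ i; omega
      have hsurp := surp_cols hbox (Finset.Icc 0 (lamHi l))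
        (Finset.Icc_subset_Icc hlo0 (le_refl _)) hocc
      have h1 := card_h_v Θ
      rw [icc_card] at hsurp
      omega
    · -- touches the left side
      have hnR : ∀ x ∈ Θ, ¬ x.1 = lamHi l := fun x hx h => hexLR ⟨p.1, hp1Θ, hL1⟩ ⟨x, hx, h⟩
      have hnT : ∀ x ∈ Θ, ¬ x.2 = lamHi l := fun x hx h => hexLT ⟨p.1, hp1Θ, hL1⟩ ⟨x, hx, h⟩
      have hnB : ∀ x ∈ Θ, ¬ x.2 = lamLo l := fun x hx h => hexLB ⟨p.1, hp1Θ, hL1⟩ ⟨x, hx, h⟩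
      have hform : ∀ q ∈ Pout l Θ,
          q = (((lamLo l, q.1.2) : Site), ((lamLo l - 1, q.1.2) : Site)) := by
        intro q hq
        have hq1Θ : q.1 ∈ Θ := (mem_cutP.1 (Finset.mem_filter.1 hq).1).1
        rcases pout_cases hbox hq with ⟨h1, _⟩ | ⟨_, h⟩ | ⟨h1, _⟩ | ⟨h1, _⟩
        · exact absurd h1 (hnR _ hq1Θ)
        · exact h
        · exact absurd h1 (hnT _ hq1Θ)
        · exact absurd h1 (hnB _ hq1Θ)
      have hhoriz := pout_horiz_bound hbox _ _ hform
      have haC := hLC p.1 hp1Θ hL1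
      have hocc : ∀ i ∈ Finset.Icc (lamLo l) 0, ∃ j, ((i, j) : Site) ∈ Θ := by
        intro i hi
        rw [Finset.mem_Icc] at hi
        have hp1box := mem_lamBox.1 (hbox _ hp1Θ)
        refine hcol_occ p.1 (((kR:ℤ), (0:ℤ)) : Site) haC hkR i (by omega) ?_
        show i ≤ (kR:ℤ); omega
      have hsurp := surp_cols hbox (Finset.Icc (lamLo l) 0)
        (Finset.Icc_subset_Icc (le_refl _) hhi0) hocc
      have h1 := card_h_v Θ
      rw [icc_card] at hsurp
      omega
    · -- touches the top side
      have hnL : ∀ x ∈ Θ, ¬ x.1 = lamLo l := fun x hx h => hexLT ⟨x, hx, h⟩ ⟨p.1, hp1Θ, hT1⟩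
      have hnR : ∀ x ∈ Θ, ¬ x.1 = lamHi l := fun x hx h => hexRT ⟨x, hx, h⟩ ⟨p.1, hp1Θ, hT1⟩
      have hnB : ∀ x ∈ Θ, ¬ x.2 = lamLo l := fun x hx h => hexTB ⟨p.1, hp1Θ, hT1⟩ ⟨x, hx, h⟩
      have hform : ∀ q ∈ Pout l Θ,
          q = (((q.1.1, lamHi l) : Site), ((q.1.1, lamHi l + 1) : Site)) := by
        intro q hq
        have hq1Θ : q.1 ∈ Θ := (mem_cutP.1 (Finset.mem_filter.1 hq).1).1
        rcases pout_cases hbox hq with ⟨h1, _⟩ | ⟨h1, _⟩ | ⟨_, h⟩ | ⟨h1, _⟩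
        · exact absurd h1 (hnR _ hq1Θ)
        · exact absurd h1 (hnL _ hq1Θ)
        · exact h
        · exact absurd h1 (hnB _ hq1Θ)
      have hvert := pout_vert_bound hbox _ _ hform
      have hcC := hTC p.1 hp1Θ hT1
      have hocc : ∀ j ∈ Finset.Icc 0 (lamHi l), ∃ i, ((i, j) : Site) ∈ Θ := by
        intro j hj
        rw [Finset.mem_Icc] at hj
        refine hrow_occ (((0:ℤ), -(kD:ℤ)) : Site) p.1 hkD hcC j ?_ (by omega)
        show -(kD:ℤ) ≤ j; omega
      have hsurp := surp_rows hbox (Finset.Icc 0 (lamHi l))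
        (Finset.Icc_subset_Icc hlo0 (le_refl _)) hocc
      have h1 := card_h_v Θ
      rw [icc_card] at hsurp
      omega
    · -- touches the bottom side
      have hnL : ∀ x ∈ Θ, ¬ x.1 = lamLo l := fun x hx h => hexLB ⟨x, hx, h⟩ ⟨p.1, hp1Θ, hB1⟩
      have hnR : ∀ x ∈ Θ, ¬ x.1 = lamHi l := fun x hx h => hexRB ⟨x, hx, h⟩ ⟨p.1, hp1Θ, hB1⟩
      have hnT : ∀ x ∈ Θ, ¬ x.2 = lamHi l := fun x hx h => hexTB ⟨x, hx, h⟩ ⟨p.1, hp1Θ, hB1⟩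
      have hform : ∀ q ∈ Pout l Θ,
          q = (((q.1.1, lamLo l) : Site), ((q.1.1, lamLo l - 1) : Site)) := by
        intro q hq
        have hq1Θ : q.1 ∈ Θ := (mem_cutP.1 (Finset.mem_filter.1 hq).1).1
        rcases pout_cases hbox hq with ⟨h1, _⟩ | ⟨h1, _⟩ | ⟨h1, _⟩ | ⟨_, h⟩
        · exact absurd h1 (hnR _ hq1Θ)
        · exact absurd h1 (hnL _ hq1Θ)
        · exact absurd h1 (hnT _ hq1Θ)
        · exact h
      have hvert := pout_vert_bound hbox _ _ hform
      have hdC := hBC p.1 hp1Θ hB1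
      have hocc : ∀ j ∈ Finset.Icc (lamLo l) 0, ∃ i, ((i, j) : Site) ∈ Θ := by
        intro j hj
        rw [Finset.mem_Icc] at hj
        have hp1box := mem_lamBox.1 (hbox _ hp1Θ)
        refine hrow_occ p.1 (((0:ℤ), (kU:ℤ)) : Site) hdC hkU j (by omega) ?_
        show j ≤ (kU:ℤ); omega
      have hsurp := surp_rows hbox (Finset.Icc (lamLo l) 0)
        (Finset.Icc_subset_Icc (le_refl _) hhi0) hocc
      have h1 := card_h_v Θ
      rw [icc_card] at hsurp
      omega
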